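/- Let G be a connected Lie group with Lie algebra g, S ⊆ g a generating subset for a subalgebra g' whose corresponding connected subgroup is dense in G, and g'' ⊆ g a linear subspace with [g'', u] = 0 for all u ∈ S. Then g'' is contained in the center of g. -/

import Mathlib

open NormedSpace

attribute [local instance high] NormedAddCommGroup.toAddCommGroup NormedSpace.toModule

/-- Skew-symmetry of the bracket transfers zeros across the two additive structures,
using that the bracket is realized by continuous linear maps `adC`. -/
lemma lie_swap_eq_zero {g : Type*} [NormedAddCommGroup g] [NormedSpace ℝ g]
    [LieRing g] [LieAlgebra ℝ g]
    (adC : g → (g →L[ℝ] g)) (hadC : ∀ u y : g, adC u y = ⁅u, y⁆)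
    (y x : g) (h : ⁅x, y⁆ = 0) : ⁅y, x⁆ = 0 := by
  have key : ∀ w : g, ⁅w, (0:g)⁆ = (0:g) := fun w => by
    rw [← hadC]; exact map_zero (adC w)
  rw [← lie_skew, h, ← key x,
    ← @neg_lie g g _ LieRing.toAddCommGroup inferInstance x (0:g),
    ← hadC, ← hadC, map_zero, map_zero]

/-- If `B y = 0`, then `exp B y = y`. -/
lemma exp_apply_of_apply_eq_zero {g : Type*} [NormedAddCommGroup g] [NormedSpace ℝ g]
    [FiniteDimensional ℝ g] (B : g →L[ℝ] g) (y : g) (h : B y = 0) :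
    exp B y = y := by
  have hsum : Summable fun n : ℕ => (n.factorial : ℝ)⁻¹ • B ^ n :=
    expSeries_summable' (𝕂 := ℝ) B
  have htsum := (ContinuousLinearMap.apply ℝ g y).map_tsum hsum
  simp only [ContinuousLinearMap.apply_apply] at htsum
  rw [exp_eq_tsum ℝ]
  rw [htsum]
  have hterm : ∀ n : ℕ, ((n.factorial : ℝ)⁻¹ • B ^ n) y = if n = 0 then y else 0 := by
    intro n
    cases n with
    | zero => simp
    | succ m =>
      have hpow : (B ^ (m + 1)) y = (B ^ m) (B y) := by
        rw [pow_succ, ContinuousLinearMap.mul_apply]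
      simp [hpow, h]
  rw [tsum_congr hterm, tsum_ite_eq]

/-- If a subspace `g''` commutes with every generator `u ∈ S` of a subgroup `G'` of the
adjoint group which is dense (its closure contains `exp(t·ad x)` for every `x ∈ g`,
i.e. the connected subgroup corresponding to the subalgebra generated by `S` is dense in `G`),
then `g''` is contained in the center of `g`. -/
theorem stmt_9 {g : Type*} [NormedAddCommGroup g] [NormedSpace ℝ g] [FiniteDimensional ℝ g]
    [LieRing g] [LieAlgebra ℝ g]
    (adC : g → (g →L[ℝ] g)) (hadC : ∀ u y : g, adC u y = ⁅u, y⁆)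
    (S : Set g) (G' : Submonoid (g →L[ℝ] g))
    (hG' : G' = Submonoid.closure
      {A : g →L[ℝ] g | ∃ u ∈ S, ∃ t : ℝ, A = exp (t • adC u)})
    (hdense : ∀ (x : g) (t : ℝ), exp (t • adC x) ∈ closure (G' : Set (g →L[ℝ] g)))
    (g'' : Submodule ℝ g)
    (hcomm : ∀ u ∈ S, ∀ y ∈ g'', ⁅y, u⁆ = 0) :
    ∀ y ∈ g'', ∀ x : g, ⁅y, x⁆ = 0 := by
  intro y hy x
  -- every element of G' fixes y
  have hfix : ∀ A ∈ G', A y = y := by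
    intro A hA
    rw [hG'] at hA
    induction hA using Submonoid.closure_induction with
    | mem A hA =>
      obtain ⟨u, huS, t, rfl⟩ := hA
      apply exp_apply_of_apply_eq_zero
      have h0 : adC u y = 0 := by
        rw [hadC]
        exact lie_swap_eq_zero adC hadC u y (hcomm u huS y hy)
      simp [h0]
    | one => simp
    | mul A B _ _ hA hB => simp [ContinuousLinearMap.mul_apply, hA, hB]
  -- the fixing set is closed, so closure of G' fixes y
  have hclosed : IsClosed {A : g →L[ℝ] g | A y = y} := by
    have : Continuous fun A : g →L[ℝ] g => A y :=
      (ContinuousLinearMap.apply ℝ g y).continuous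
    exact isClosed_eq this continuous_const
  have hfix' : ∀ t : ℝ, exp (t • adC x) y = y := by
    intro t
    have hsub : closure (G' : Set (g →L[ℝ] g)) ⊆ {A : g →L[ℝ] g | A y = y} :=
      closure_minimal (fun A hA => hfix A hA) hclosed
    exact hsub (hdense x t)
  -- differentiate at t = 0
  have hderiv : HasDerivAt (fun t : ℝ => exp (t • adC x) y)
      ((exp ((0 : ℝ) • adC x) * adC x) y + exp ((0 : ℝ) • adC x) 0) 0 :=
    (hasDerivAt_exp_smul_const (𝕂 := ℝ) (adC x) (0 : ℝ)).clm_apply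
      (hasDerivAt_const _ y)
  have heq : (fun t : ℝ => exp (t • adC x) y) = fun _ => y := funext hfix'
  rw [heq] at hderiv
  have h0 : (exp ((0 : ℝ) • adC x) * adC x) y + exp ((0 : ℝ) • adC x) 0 = 0 :=
    hderiv.unique (hasDerivAt_const _ y)
  simp only [zero_smul, exp_zero, one_mul, map_zero, add_zero] at h0
  rw [hadC] at h0
  exact lie_swap_eq_zero adC hadC y x h0
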